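/- arXiv:1605.09575 — 2 statements merged into one kernel-verified Lean document; each statement's English description precedes it below -/
import Mathlib

section
/- Let λ be a partition of 2n+1 in which every even part has even multiplicity (a type B partition). Then the following are equivalent: (i) the transpose λ^t is again a type B partition, i.e. every even part of λ^t has even multiplicity; (ii) for every even part e of λ, the number of parts of λ strictly greater than e is odd; (iii) writing the parts of λ in weakly decreasing order as r_{2k} ≥ r_{2k−1} ≥ ⋯ ≥ r_0 (the number of parts of a type B partition is automatically odd), the even parts occur precisely in consecutive equal pairs of the form r_{2l−1} = r_{2l−2}. (These equivalent conditions characterize the special nilpotent orbits of SO(2n+1,ℂ).) -/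
/-- `l` is a partition of `N`: a weakly decreasing list of positive integers with sum `N`. -/
def IsPartitionOf (N : ℕ) (l : List ℕ) : Prop :=
  l.Pairwise (· ≥ ·) ∧ (∀ x ∈ l, 0 < x) ∧ l.sum = N

/-- the `j`-th column length `c_j(λ) = #{i : λ_i ≥ j}`. -/
def colLen (l : List ℕ) (j : ℕ) : ℕ := l.countP (fun x => decide (j ≤ x))

/-- the transpose partition, as the list `c_1 ≥ c_2 ≥ ⋯ ≥ c_{λ_1}` of column lengths. -/
def transposeList (l : List ℕ) : List ℕ :=
  (List.range (l.foldr max 0)).map (fun j => colLen l (j + 1))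

lemma gal (l : List ℕ) (hs : l.Pairwise (· ≥ ·)) (c : ℕ) (hc : 1 ≤ c) :
    ∀ i, i < colLen l c ↔ c ≤ l.getD i 0 := by
  induction l with
  | nil => intro i; simp [colLen]; omega
  | cons x t ih =>
    rw [List.pairwise_cons] at hs
    intro i
    by_cases hx : c ≤ x
    · simp only [colLen, List.countP_cons, hx, decide_true, if_pos rfl]
      cases i with
      | zero => simpa using hx
      | succ i =>
        rw [List.getD_cons_succ, if_pos trivial, Nat.add_lt_add_iff_right]
        exact ih hs.2 i
    · have h0 : (x :: t).countP (fun x => decide (c ≤ x)) = 0 := by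
        rw [List.countP_eq_zero]
        intro a ha
        simp only [List.mem_cons] at ha
        rcases ha with rfl | ha
        · simpa using hx
        · have := hs.1 a ha; simp; omega
      simp only [colLen, h0]
      constructor
      · omega
      · intro h; exfalso
        cases i with
        | zero => exact hx (by simpa using h)
        | succ i =>
          rw [List.getD_cons_succ] at h
          rcases Nat.lt_or_ge i t.length with hi | hi
          · rw [List.getD_eq_getElem t 0 hi] at h
            have := hs.1 _ (t.getElem_mem hi); omega
          · rw [List.getD_eq_default t 0 hi] at h; omega

lemma getD_mono (l : List ℕ) (hs : l.Pairwise (· ≥ ·)) {i j : ℕ} (hij : i ≤ j) :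
    l.getD j 0 ≤ l.getD i 0 := by
  set c := l.getD j 0 with hc
  rcases Nat.eq_zero_or_pos c with h | h
  · omega
  · have hj := (gal l hs c h j).mpr (le_refl c)
    exact (gal l hs c h i).mp (lt_of_le_of_lt hij hj)

lemma colLen_eq_add_count (l : List ℕ) (e : ℕ) :
    colLen l e = colLen l (e + 1) + l.count e := by
  induction l with
  | nil => simp [colLen]
  | cons x t ih =>
    simp only [colLen, List.countP_cons, List.count_cons] at *
    rcases Nat.lt_trichotomy x e with h | h | h
    · have h1 : ¬ (e ≤ x) := by omega
      have h2 : ¬ (e + 1 ≤ x) := by omega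
      have h3 : ¬ (x = e) := by omega
      simp [h1, h2, h3, ih]
    · subst h
      simp [ih]
      omega
    · have h1 : e ≤ x := by omega
      have h2 : e + 1 ≤ x := by omega
      have h3 : ¬ (x = e) := by omega
      simp [h1, h2, h3, ih]
      omega

lemma le_foldr_max (l : List ℕ) {x : ℕ} (h : x ∈ l) : x ≤ l.foldr max 0 := by
  induction l with
  | nil => simp at h
  | cons y t ih =>
    simp only [List.mem_cons] at h
    simp only [List.foldr_cons]
    rcases h with rfl | h
    · exact le_max_left _ _
    · exact le_trans (ih h) (le_max_right _ _)

lemma foldr_max_le (l : List ℕ) {b : ℕ} (h : ∀ x ∈ l, x ≤ b) : l.foldr max 0 ≤ b := by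
  induction l with
  | nil => simp
  | cons y t ih =>
    simp only [List.foldr_cons, max_le_iff]
    exact ⟨h y (by simp), ih fun x hx => h x (by simp [hx])⟩

lemma head_le_getD0 (l : List ℕ) (hs : l.Pairwise (· ≥ ·)) {x : ℕ} (h : x ∈ l) :
    x ≤ l.getD 0 0 := by
  cases l with
  | nil => simp at h
  | cons y t =>
    rw [List.pairwise_cons] at hs
    simp only [List.mem_cons] at h
    rcases h with rfl | h
    · simp
    · simpa using hs.1 x h

lemma countP_range_interval (a b : ℕ) : ∀ m,
    (List.range m).countP (fun j => decide (a ≤ j ∧ j < b)) = min b m - min a m := by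
  intro m
  induction m with
  | zero => simp
  | succ m ih =>
    rw [List.range_succ, List.countP_append]
    have hone : List.countP (fun j => decide (a ≤ j ∧ j < b)) [m]
        = if a ≤ m ∧ m < b then 1 else 0 := by
      simp [List.countP_cons]
    rw [hone, ih]
    by_cases h : a ≤ m ∧ m < b <;> simp [h] <;> omega

lemma transpose_count (l : List ℕ) (hs : l.Pairwise (· ≥ ·)) (hne : l ≠ []) (v : ℕ)
    (hv : 1 ≤ v) :
    (transposeList l).count v = l.getD (v - 1) 0 - l.getD v 0 := by
  have h0mem : l.getD 0 0 ∈ l := by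
    cases l with
    | nil => exact absurd rfl hne
    | cons x t => simp
  have hm : l.getD 0 0 ≤ l.foldr max 0 := le_foldr_max l h0mem
  have hv1 : l.getD (v-1) 0 ≤ l.foldr max 0 := le_trans (getD_mono l hs (Nat.zero_le _)) hm
  have hv2 : l.getD v 0 ≤ l.foldr max 0 := le_trans (getD_mono l hs (Nat.zero_le _)) hm
  rw [transposeList, List.count_eq_countP, List.countP_map]
  have hcongr : ∀ j ∈ List.range (l.foldr max 0),
      (((fun x => x == v) ∘ fun j => colLen l (j+1)) j = true)
        ↔ (decide (l.getD v 0 ≤ j ∧ j < l.getD (v-1) 0) = true) := by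
    intro j _
    simp only [Function.comp, beq_iff_eq, decide_eq_true_eq]
    constructor
    · intro hcl
      constructor
      · by_contra hh
        push_neg at hh
        have := (gal l hs (j+1) (by omega) v).mpr (by omega)
        omega
      · have h2 : v - 1 < colLen l (j+1) := by omega
        have := (gal l hs (j+1) (by omega) (v-1)).mp h2
        omega
    · rintro ⟨h1, h2⟩
      have ha : v ≤ colLen l (j+1) := by
        have := (gal l hs (j+1) (by omega) (v-1)).mpr (by omega)
        omega
      have hb : ¬ (v + 1 ≤ colLen l (j+1)) := by
        intro hh
        have := (gal l hs (j+1) (by omega) v).mp (by omega)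
        omega
      omega
  rw [List.countP_congr hcongr, countP_range_interval]
  have : l.getD v 0 ≤ l.getD (v-1) 0 := getD_mono l hs (by omega)
  omega

lemma transpose_pos (l : List ℕ) (hs : l.Pairwise (· ≥ ·)) {v : ℕ}
    (h : v ∈ transposeList l) : 1 ≤ v := by
  rw [transposeList, List.mem_map] at h
  obtain ⟨j, hj, rfl⟩ := h
  rw [List.mem_range] at hj
  have hfold : l.foldr max 0 ≤ l.getD 0 0 :=
    foldr_max_le l fun x hx => head_le_getD0 l hs hx
  have := (gal l hs (j+1) (by omega) 0).mpr (by omega)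
  omega

lemma sum_eq_range_sum (l : List ℕ) :
    l.sum = ∑ i ∈ Finset.range l.length, l.getD i 0 := by
  induction l with
  | nil => simp
  | cons x t ih =>
    rw [List.sum_cons, ih, List.length_cons, Finset.sum_range_succ']
    simp [List.getD_cons_succ]
    omega

lemma sum_parity_countOdd (l : List ℕ) :
    l.sum % 2 = l.countP (fun x => decide (x % 2 = 1)) % 2 := by
  induction l with
  | nil => simp
  | cons x t ih =>
    rw [List.sum_cons, List.countP_cons]
    by_cases h : x % 2 = 1 <;> simp [h] <;> omega

lemma countP_split (p q : ℕ → Bool) (l : List ℕ) :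
    l.countP p = (l.filter q).countP p + l.countP (fun y => p y && !(q y)) := by
  induction l with
  | nil => simp
  | cons x t ih =>
    rw [List.filter_cons]
    by_cases hq : q x
    · simp [List.countP_cons, hq, ih]
      by_cases hp : p x <;> simp [hp] <;> omega
    · simp only [hq]
      simp only [List.countP_cons, ih, Bool.not_false, hq]
      by_cases hp : p x <;> simp [hp] <;> omega

lemma even_countP_even : ∀ (k : ℕ) (l : List ℕ), l.length ≤ k →
    (∀ e ∈ l, Even e → Even (l.count e)) →
    Even (l.countP (fun x => decide (x % 2 = 0))) := by
  intro k
  induction k with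
  | zero =>
    intro l hl _
    have : l = [] := List.length_eq_zero_iff.mp (by omega)
    subst this; simp
  | succ k ih =>
    intro l hl hB
    cases hli : l with
    | nil => simp
    | cons x t =>
      rw [← hli]
      have hxl : x ∈ l := by rw [hli]; simp
      set l' := l.filter (fun y => decide (y ≠ x)) with hl'
      have hlen : l'.length < l.length := by
        rw [hl', List.length_filter_lt_length_iff_exists]
        exact ⟨x, hxl, by simp⟩
      have hcount : ∀ e, e ∈ l' → l'.count e = l.count e := by
        intro e he
        have hne : e ≠ x := by
          rw [hl'] at he
          have := List.of_mem_filter he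
          simpa using this
        exact List.count_filter (by simpa using hne)
      have hB' : ∀ e ∈ l', Even e → Even (l'.count e) := by
        intro e he hee
        rw [hcount e he]
        exact hB e (List.mem_of_mem_filter he) hee
      have ih' := ih l' (by omega) hB'
      have hsplit := countP_split (fun x => decide (x % 2 = 0)) (fun y => decide (y ≠ x)) l
      rw [← hl'] at hsplit
      by_cases hx : x % 2 = 0
      · have hrest : l.countP (fun y => decide (y % 2 = 0) && !(decide (y ≠ x))) = l.count x := by
          rw [List.count_eq_countP]
          apply List.countP_congr
          intro a _
          by_cases hax : a = x <;> simp [hax, hx]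
        rw [hrest] at hsplit
        have hcx : Even (l.count x) := hB x hxl (Nat.even_iff.mpr hx)
        rw [Nat.even_iff] at *
        omega
      · have hrest : l.countP (fun y => decide (y % 2 = 0) && !(decide (y ≠ x))) = 0 := by
          rw [List.countP_eq_zero]
          intro a _
          by_cases hax : a = x
          · simp [hax, hx]
          · simp [hax]
        rw [hrest] at hsplit
        rw [Nat.even_iff] at *
        omega

lemma sum_parity_pairs (f : ℕ → ℕ) : ∀ (k : ℕ),
    (∀ t < k, f (2*t+1) % 2 = f (2*t+2) % 2) →
    (∑ i ∈ Finset.range (2*k+1), f i) % 2 = f 0 % 2 := by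
  intro k
  induction k with
  | zero => simp
  | succ k ih =>
    intro h
    have h1 : 2*(k+1)+1 = (2*k+1) + 1 + 1 := by omega
    rw [h1, Finset.sum_range_succ, Finset.sum_range_succ]
    have h2 := ih fun t ht => h t (by omega)
    have h3 := h k (by omega)
    have e1 : 2*k+1+1 = 2*k+2 := by omega
    rw [e1] at *
    omega

/-- the intermediate parity condition `P` -/
def CondP (l : List ℕ) : Prop :=
  ∀ j, 2 ≤ j → j % 2 = 0 → l.getD (j-1) 0 % 2 = l.getD j 0 % 2

lemma one_iff_P (l : List ℕ) (hs : l.Pairwise (· ≥ ·)) (hne : l ≠ []) :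
    (∀ e ∈ transposeList l, Even e → Even ((transposeList l).count e)) ↔ CondP l := by
  constructor
  · intro h1 j hj2 hje
    by_contra hpar
    have hmono : l.getD j 0 ≤ l.getD (j-1) 0 := getD_mono l hs (by omega)
    have hcnt := transpose_count l hs hne j (by omega)
    have hposc : 0 < (transposeList l).count j := by omega
    have hmem : j ∈ transposeList l := List.count_pos_iff.mp hposc
    have := h1 j hmem (Nat.even_iff.mpr hje)
    rw [Nat.even_iff] at this
    omega
  · intro hP v hmem hve
    have hv1 : 1 ≤ v := transpose_pos l hs hmem
    rw [Nat.even_iff] at hve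
    have hv2 : 2 ≤ v := by omega
    have hcnt := transpose_count l hs hne v (by omega)
    have hmono : l.getD v 0 ≤ l.getD (v-1) 0 := getD_mono l hs (by omega)
    have := hP v hv2 hve
    rw [Nat.even_iff]
    omega

lemma P_to_two (l : List ℕ) (hs : l.Pairwise (· ≥ ·)) (hpos : ∀ x ∈ l, 0 < x)
    (hB : ∀ e ∈ l, Even e → Even (l.count e))
    (ha0 : l.getD 0 0 % 2 = 1) (hP : CondP l) :
    ∀ e ∈ l, Even e → Odd (l.countP (fun x => decide (e < x))) := by
  suffices H : ∀ c e, e ∈ l → Even e → colLen l (e+1) = c → Odd c by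
    intro e hmem he
    exact H _ e hmem he rfl
  intro c
  induction c using Nat.strong_induction_on with
  | _ c ih =>
    intro e hmem he hc
    by_contra hodd
    rw [Nat.odd_iff] at hodd
    have hce : c % 2 = 0 := by omega
    have he2 : e % 2 = 0 := Nat.even_iff.mp he
    have hepos : 0 < e := hpos e hmem
    have hcount : 0 < l.count e := List.count_pos_iff.mpr hmem
    have hcl : colLen l e = c + l.count e := by
      rw [colLen_eq_add_count, hc]
    rcases Nat.eq_zero_or_pos c with hc0 | hcpos
    · -- c = 0 : then l.getD 0 0 = e, even, contradiction
      subst hc0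
      have h1 : e ≤ l.getD 0 0 := (gal l hs e (by omega) 0).mp (by omega)
      have h2 : ¬ (e + 1 ≤ l.getD 0 0) := by
        intro hh
        have := (gal l hs (e+1) (by omega) 0).mpr hh
        omega
      omega
    · have hc2 : 2 ≤ c := by omega
      -- a c = e
      have hace : l.getD c 0 = e := by
        have h1 : e ≤ l.getD c 0 := (gal l hs e (by omega) c).mp (by omega)
        have h2 : ¬ (e + 1 ≤ l.getD c 0) := by
          intro hh
          have := (gal l hs (e+1) (by omega) c).mpr hh
          omega
        omega
      set e' := l.getD (c-1) 0 with he'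
      have hee' : e < e' := by
        have := (gal l hs (e+1) (by omega) (c-1)).mp (by omega)
        omega
      have he'ev : e' % 2 = 0 := by
        have := hP c hc2 hce
        rw [hace] at this
        omega
      have hc1L : c - 1 < l.length := by
        have : colLen l e ≤ l.length := List.countP_le_length
        omega
      have he'mem : e' ∈ l := by
        rw [he', List.getD_eq_getElem l 0 hc1L]
        exact List.getElem_mem hc1L
      have hcle' : colLen l e' = c := by
        have h1 : c - 1 < colLen l e' := (gal l hs e' (by omega) (c-1)).mpr (by omega)
        have h2 : ¬ (c < colLen l e') := by
          intro hh
          have := (gal l hs e' (by omega) c).mp hh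
          omega
        omega
      have hcnte' : 0 < l.count e' := List.count_pos_iff.mpr he'mem
      have hcnte'ev : Even (l.count e') := hB e' he'mem (Nat.even_iff.mpr he'ev)
      rw [Nat.even_iff] at hcnte'ev
      have hsplit : colLen l e' = colLen l (e'+1) + l.count e' := colLen_eq_add_count l e'
      set c' := colLen l (e'+1) with hc'
      have hlt : c' < c := by omega
      have := ih c' hlt e' he'mem (Nat.even_iff.mpr he'ev) rfl
      rw [Nat.odd_iff] at this
      omega



lemma rev_getD (l : List ℕ) {q : ℕ} (h : q < l.length) :
    l.reverse.getD q 0 = l.getD (l.length - 1 - q) 0 := by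
  rw [List.getD_eq_getElem l.reverse 0 (by simpa using h),
      List.getD_eq_getElem l 0 (by omega)]
  exact List.getElem_reverse _

lemma length_odd (n : ℕ) (l : List ℕ) (hsum : l.sum = 2*n+1)
    (hB : ∀ e ∈ l, Even e → Even (l.count e)) : l.length % 2 = 1 := by
  have h1 := sum_parity_countOdd l
  have h2 := even_countP_even l.length l le_rfl hB
  have h3 : l.length = _ := List.length_eq_countP_add_countP (fun x => decide (x % 2 = 0))
  have h4 : l.countP (fun a => decide ¬(decide (a % 2 = 0)) = true)
      = l.countP (fun x => decide (x % 2 = 1)) := by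
    apply List.countP_congr
    intro a _
    simp
  rw [h4] at h3
  rw [Nat.even_iff] at h2
  omega

lemma a0_odd (n : ℕ) (l : List ℕ) (hsum : l.sum = 2*n+1)
    (hB : ∀ e ∈ l, Even e → Even (l.count e)) (hP : CondP l) :
    l.getD 0 0 % 2 = 1 := by
  have hL := length_odd n l hsum hB
  set k := (l.length - 1) / 2 with hk
  have hLk : l.length = 2*k+1 := by omega
  have hpairs : ∀ t < k, l.getD (2*t+1) 0 % 2 = l.getD (2*t+2) 0 % 2 := by
    intro t ht
    have := hP (2*t+2) (by omega) (by omega)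
    have e1 : 2*t+2-1 = 2*t+1 := by omega
    rw [e1] at this
    exact this
  have := sum_parity_pairs (fun i => l.getD i 0) k hpairs
  rw [sum_eq_range_sum, hLk] at hsum
  omega

lemma two_to_three (l : List ℕ) (hs : l.Pairwise (· ≥ ·)) (hpos : ∀ x ∈ l, 0 < x)
    (hB : ∀ e ∈ l, Even e → Even (l.count e)) (hL : l.length % 2 = 1)
    (h2 : ∀ e ∈ l, Even e → Odd (l.countP (fun x => decide (e < x)))) :
    ∀ p < l.length, Even (l.reverse.getD p 0) →
         (Odd p → l.reverse.getD (p - 1) 0 = l.reverse.getD p 0) ∧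
         (Even p → p + 1 < l.length ∧ l.reverse.getD (p + 1) 0 = l.reverse.getD p 0) := by
  intro p hp heven
  set L := l.length with hLdef
  set i := L - 1 - p with hi
  have hiL : i < L := by omega
  have hrev : l.reverse.getD p 0 = l.getD i 0 := rev_getD l hp
  set v := l.getD i 0 with hv
  have hvmem : v ∈ l := by
    rw [hv, List.getD_eq_getElem l 0 hiL]
    exact List.getElem_mem hiL
  have hvpos : 0 < v := hpos v hvmem
  have hvev : v % 2 = 0 := by
    rw [hrev, Nat.even_iff] at heven
    exact heven
  have hcodd := h2 v hvmem (Nat.even_iff.mpr hvev)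
  rw [Nat.odd_iff] at hcodd
  have hcc : l.countP (fun x => decide (v < x)) = colLen l (v+1) := rfl
  rw [hcc] at hcodd
  set c := colLen l (v+1) with hcdef
  set d := colLen l v with hddef
  have hdc : d = c + l.count v := colLen_eq_add_count l v
  have hcount : Even (l.count v) := hB v hvmem (Nat.even_iff.mpr hvev)
  rw [Nat.even_iff] at hcount
  have hid : i < d := (gal l hs v (by omega) i).mpr (by omega)
  have hci : c ≤ i := by
    by_contra hh
    have := (gal l hs (v+1) (by omega) i).mp (by omega)
    omega
  constructor
  · intro hpodd
    rw [Nat.odd_iff] at hpodd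
    have hiodd : i % 2 = 1 := by omega
    have hi1d : i + 1 < d := by omega
    have hvi1 : l.getD (i+1) 0 = v := by
      have h1 : v ≤ l.getD (i+1) 0 := (gal l hs v (by omega) (i+1)).mp hi1d
      have h2' : l.getD (i+1) 0 ≤ v := getD_mono l hs (by omega)
      omega
    have hq : l.reverse.getD (p-1) 0 = l.getD (i+1) 0 := by
      have := rev_getD l (show p - 1 < l.length by omega)
      have e1 : L - 1 - (p-1) = i + 1 := by omega
      rw [← hLdef, e1] at this
      exact this
    rw [hq, hrev, hvi1]
  · intro hpev
    rw [Nat.even_iff] at hpev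
    have hiev : i % 2 = 0 := by omega
    have hi1 : 1 ≤ i := by omega
    have hvi1 : l.getD (i-1) 0 = v := by
      have h1 : v ≤ l.getD (i-1) 0 := (gal l hs v (by omega) (i-1)).mp (by omega)
      have h2' : ¬ (v + 1 ≤ l.getD (i-1) 0) := by
        intro hh
        have := (gal l hs (v+1) (by omega) (i-1)).mpr hh
        omega
      omega
    refine ⟨by omega, ?_⟩
    have hq : l.reverse.getD (p+1) 0 = l.getD (i-1) 0 := by
      have := rev_getD l (show p + 1 < l.length by omega)
      have e1 : L - 1 - (p+1) = i - 1 := by omega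
      rw [← hLdef, e1] at this
      exact this
    rw [hq, hrev, hvi1]

lemma three_to_P (l : List ℕ) (hL : l.length % 2 = 1)
    (h3 : ∀ p < l.length, Even (l.reverse.getD p 0) →
         (Odd p → l.reverse.getD (p - 1) 0 = l.reverse.getD p 0) ∧
         (Even p → p + 1 < l.length ∧ l.reverse.getD (p + 1) 0 = l.reverse.getD p 0)) :
    CondP l := by
  intro j hj2 hje
  set L := l.length with hLdef
  rcases Nat.lt_or_ge L j with hcase | hcase
  · rw [List.getD_eq_default l 0 (show L ≤ j - 1 by omega),
        List.getD_eq_default l 0 (show L ≤ j by omega)]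
  · have hjL : j < L := by omega
    by_contra hpar
    rcases Nat.lt_or_ge (l.getD (j-1) 0 % 2) 1 with hev | hodd
    · -- a (j-1) even ; it sits at reverse position p = L - j (odd)
      have hp : L - j < L := by omega
      have hrev : l.reverse.getD (L-j) 0 = l.getD (j-1) 0 := by
        have := rev_getD l hp
        have e1 : L - 1 - (L-j) = j - 1 := by omega
        rw [← hLdef, e1] at this
        exact this
      have heven : Even (l.reverse.getD (L-j) 0) := by
        rw [hrev, Nat.even_iff]; omega
      have hpodd : Odd (L - j) := by rw [Nat.odd_iff]; omega
      have := ((h3 (L-j) hp heven).1 hpodd)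
      have hrev2 : l.reverse.getD (L-j-1) 0 = l.getD j 0 := by
        have := rev_getD l (show L - j - 1 < l.length by omega)
        have e1 : L - 1 - (L-j-1) = j := by omega
        rw [← hLdef, e1] at this
        exact this
      rw [hrev, hrev2] at this
      omega
    · -- then a j must be even ; reverse position p = L - 1 - j (even)
      have hjev : l.getD j 0 % 2 = 0 := by omega
      have hp : L - 1 - j < L := by omega
      have hrev : l.reverse.getD (L-1-j) 0 = l.getD j 0 := by
        have := rev_getD l hp
        have e1 : L - 1 - (L-1-j) = j := by omega
        rw [← hLdef, e1] at this
        exact this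
      have heven : Even (l.reverse.getD (L-1-j) 0) := by
        rw [hrev, Nat.even_iff]; omega
      have hpev : Even (L - 1 - j) := by rw [Nat.even_iff]; omega
      obtain ⟨hplt, heq⟩ := (h3 (L-1-j) hp heven).2 hpev
      have hrev2 : l.reverse.getD (L-1-j+1) 0 = l.getD (j-1) 0 := by
        have := rev_getD l (show L - 1 - j + 1 < l.length by omega)
        have e1 : L - 1 - (L-1-j+1) = j - 1 := by omega
        rw [← hLdef, e1] at this
        exact this
      rw [hrev, hrev2] at heq
      omega

/-- For a type B partition `l` of `2n+1` (every even part has even multiplicity),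
the following are equivalent:
(i) the transpose is again of type B;
(ii) for every even part `e`, the number of parts strictly greater than `e` is odd;
(iii) writing the parts as `r_{2k} ≥ ⋯ ≥ r_0` (positions counted from the end,
so `r_p = l.reverse.getD p 0`), the even parts occur precisely in consecutive equal
pairs `r_{2l-1} = r_{2l-2}` (an even entry at an odd position equals the entry one
position below; an even entry at an even position equals the entry one position above). -/
theorem typeB_special_characterizations (n : ℕ) (l : List ℕ)
    (hpart : IsPartitionOf (2 * n + 1) l)
    (hB : ∀ e ∈ l, Even e → Even (l.count e)) :
    List.TFAE
      [∀ e ∈ transposeList l, Even e → Even ((transposeList l).count e),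
       ∀ e ∈ l, Even e → Odd (l.countP (fun x => decide (e < x))),
       ∀ p < l.length, Even (l.reverse.getD p 0) →
         (Odd p → l.reverse.getD (p - 1) 0 = l.reverse.getD p 0) ∧
         (Even p → p + 1 < l.length ∧ l.reverse.getD (p + 1) 0 = l.reverse.getD p 0)] := by
  obtain ⟨hs, hpos, hsum⟩ := hpart
  have hne : l ≠ [] := by
    intro h
    rw [h] at hsum
    simp at hsum
  have hL : l.length % 2 = 1 := length_odd n l hsum hB
  tfae_have 1 → 2 := by
    intro h1
    exact P_to_two l hs hpos hB (a0_odd n l hsum hB ((one_iff_P l hs hne).mp h1))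
      ((one_iff_P l hs hne).mp h1)
  tfae_have 2 → 3 := by
    intro h2
    exact two_to_three l hs hpos hB hL h2
  tfae_have 3 → 1 := by
    intro h3
    exact (one_iff_P l hs hne).mpr (three_to_P l hL h3)
  tfae_finish
end

section
/- Let λ be a partition of 2n in which every even part has even multiplicity (a type D partition). Then the following are equivalent: (i) the transpose λ^t is a type C partition, i.e. every odd part of λ^t has even multiplicity; (ii) for every even part e of λ, the number of parts of λ strictly greater than e is even; (iii) writing the parts in weakly decreasing order as r_{2k+1} ≥ r_{2k} ≥ ⋯ ≥ r_0 (the number of parts of a type D partition is automatically even), the even parts occur precisely in consecutive equal pairs of the form r_{2l−1} = r_{2l−2}. (These equivalent conditions characterize the special nilpotent orbits of SO(2n,ℂ); in particular every very even partition, i.e. one whose parts are all even and all of even multiplicity, satisfies them.) -/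
namespace TypeDSpecial

lemma lt_colLen_iff {l : List ℕ} (hs : l.Pairwise (· ≥ ·)) {j : ℕ} (hj : 1 ≤ j) (i : ℕ) :
    i < colLen l j ↔ j ≤ l.getD i 0 := by
  induction hs generalizing i with
  | nil => simp [colLen]; omega
  | @cons a t ha hs ih =>
    simp only [colLen, List.countP_cons] at ih ⊢
    by_cases h : j ≤ a
    · cases i with
      | zero => simp [h]
      | succ i =>
        have := ih i
        have hd : (if (decide (j ≤ a)) = true then 1 else 0) = 1 := by simp [h]
        rw [List.getD_cons_succ, hd]
        omega
    · have hz : t.countP (fun x => decide (j ≤ x)) = 0 := by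
        rw [List.countP_eq_zero]
        intro x hx
        have := ha x hx
        simp only [decide_eq_true_eq]
        omega
      rw [hz]
      have hd : (if (decide (j ≤ a)) = true then 1 else 0) = 0 := by simp [h]
      rw [hd]
      cases i with
      | zero => simp; omega
      | succ i =>
        simp only [List.getD_cons_succ]
        constructor
        · omega
        · intro hji
          exfalso
          rcases Nat.lt_or_ge i t.length with hi | hi
          · have hmem : t.getD i 0 ∈ t := by
              rw [List.getD_eq_getElem _ _ hi]; exact List.getElem_mem hi
            have := ha _ hmem; omega
          · rw [List.getD_eq_default _ _ hi] at hji; omega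

lemma getD_anti {l : List ℕ} (hs : l.Pairwise (· ≥ ·)) {i i' : ℕ} (h : i ≤ i') :
    l.getD i' 0 ≤ l.getD i 0 := by
  rcases Nat.eq_zero_or_pos (l.getD i' 0) with h0 | h0
  · omega
  · have h1 := (lt_colLen_iff hs (j := l.getD i' 0) h0 i').mpr le_rfl
    exact (lt_colLen_iff hs h0 i).mp (by omega)

lemma getD_pos_iff {l : List ℕ} (hpos : ∀ x ∈ l, 0 < x) (i : ℕ) :
    0 < l.getD i 0 ↔ i < l.length := by
  constructor
  · intro h
    by_contra hi
    rw [List.getD_eq_default _ _ (by omega)] at h; omega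
  · intro h
    rw [List.getD_eq_getElem _ _ h]
    exact hpos _ (List.getElem_mem h)

lemma mem_of_getD {l : List ℕ} (hpos : ∀ x ∈ l, 0 < x) {i e : ℕ}
    (h : l.getD i 0 = e) (he : 0 < e) : e ∈ l := by
  have hi : i < l.length := (getD_pos_iff hpos i).mp (by omega)
  rw [List.getD_eq_getElem _ _ hi] at h
  exact h ▸ List.getElem_mem hi

lemma exists_getD_of_mem {l : List ℕ} {e : ℕ} (h : e ∈ l) : ∃ i, l.getD i 0 = e := by
  obtain ⟨n, hn, he⟩ := List.mem_iff_getElem.mp h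
  exact ⟨n, by rw [List.getD_eq_getElem _ _ hn, he]⟩

lemma colLen_succ_add_count (l : List ℕ) (e : ℕ) :
    colLen l e = colLen l (e + 1) + l.count e := by
  induction l with
  | nil => simp [colLen]
  | cons a t ih =>
    simp only [colLen, List.countP_cons, List.count_cons] at ih ⊢
    by_cases h1 : e ≤ a <;> by_cases h2 : e + 1 ≤ a <;> by_cases h3 : a = e <;>
      simp [h1, h2, h3, beq_iff_eq] at ih ⊢ <;> omega

lemma colLen_one {l : List ℕ} (hpos : ∀ x ∈ l, 0 < x) : colLen l 1 = l.length := by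
  rw [colLen, List.countP_eq_length]
  intro a ha
  simpa using Nat.succ_le_of_lt (hpos a ha)


lemma foldr_max_le {l : List ℕ} {a : ℕ} (h : ∀ x ∈ l, x ≤ a) : l.foldr max 0 ≤ a := by
  induction l with
  | nil => simp
  | cons b t ih =>
    simp only [List.foldr_cons]
    have h1 := h b (by simp)
    have h2 : t.foldr max 0 ≤ a := ih (fun x hx => h x (by simp [hx]))
    omega

lemma foldr_max_eq {l : List ℕ} (hs : l.Pairwise (· ≥ ·)) : l.foldr max 0 = l.getD 0 0 := by
  cases l with
  | nil => simp
  | cons a t =>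
    rw [List.pairwise_cons] at hs
    have := foldr_max_le hs.1
    simp only [List.foldr_cons, List.getD_cons_zero]
    omega

lemma countP_range (q : ℕ → Bool) : ∀ (M a b : ℕ), b ≤ M →
    (∀ j < M, (q j = true ↔ a ≤ j ∧ j < b)) → (List.range M).countP q = b - a := by
  intro M
  induction M with
  | zero => intro a b hb _; simp; omega
  | succ M ih =>
    intro a b hb hq
    rw [List.range_succ, List.countP_append]
    have h1 : (List.range M).countP q = min b M - a := by
      refine ih a (min b M) (by omega) ?_
      intro j hj
      rw [hq j (by omega)]
      omega
    have h2 := hq M (by omega)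
    by_cases hqm : q M = true
    · rw [h2] at hqm
      simp [List.countP_cons, (h2.mpr hqm)]
      omega
    · have h3 : ¬(a ≤ M ∧ M < b) := fun hh => hqm (h2.mpr hh)
      simp only [List.countP_cons, List.countP_nil, if_neg hqm]
      omega


lemma transpose_count {l : List ℕ} (hs : l.Pairwise (· ≥ ·)) {c : ℕ} (hc : 1 ≤ c) :
    (transposeList l).count c = l.getD (c - 1) 0 - l.getD c 0 := by
  rw [transposeList, List.count, List.countP_map]
  refine countP_range _ _ (l.getD c 0) (l.getD (c - 1) 0) ?_ ?_
  · rw [foldr_max_eq hs]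
    exact getD_anti hs (Nat.zero_le _)
  · intro j _
    simp only [Function.comp_apply, beq_iff_eq]
    have hb1 := lt_colLen_iff hs (j := j + 1) (by omega) (c - 1)
    have hb2 := lt_colLen_iff hs (j := j + 1) (by omega) c
    constructor
    · intro h
      constructor
      · by_contra hh
        have : c ≤ colLen l (j + 1) := by omega
        have := hb2.mp (by omega)
        omega
      · have : c - 1 < colLen l (j + 1) := by omega
        have := hb1.mp this
        omega
    · intro ⟨h1, h2⟩
      have hA : c - 1 < colLen l (j + 1) := hb1.mpr (by omega)
      have hB : ¬ (c < colLen l (j + 1)) := fun hh => by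
        have := hb2.mp hh; omega
      omega

lemma sum_mod_two (l : List ℕ) :
    l.sum % 2 = (l.countP (fun x => decide (x % 2 = 1))) % 2 := by
  induction l with
  | nil => simp
  | cons a t ih =>
    rw [List.sum_cons, List.countP_cons]
    by_cases h : a % 2 = 1 <;> simp [h] <;> omega

lemma even_countP : ∀ (N : ℕ) (l : List ℕ), l.length ≤ N →
    (∀ x ∈ l, Even (l.count x)) → ∀ q : ℕ → Bool, Even (l.countP q) := by
  intro N
  induction N with
  | zero =>
    intro l hl _ q
    have : l = [] := List.length_eq_zero_iff.mp (by omega)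
    subst this; simp
  | succ N ih =>
    intro l hl h q
    cases l with
    | nil => simp
    | cons a t =>
      have hca : Even ((a :: t).count a) := h a (by simp)
      have hca1 : 1 ≤ (a :: t).count a := List.count_pos_iff.mpr (by simp)
      have hat : a ∈ t := by
        have : (a :: t).count a = t.count a + 1 := by
          rw [List.count_cons]; simp
        rcases hca with ⟨k, hk⟩
        have : 1 ≤ t.count a := by omega
        exact List.count_pos_iff.mp this
      have hperm : (a :: t).Perm (a :: a :: t.erase a) :=
        List.Perm.cons a (List.perm_cons_erase hat)
      have hlen : (t.erase a).length ≤ N := by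
        have h1 : (t.erase a).length = t.length - 1 := List.length_erase_of_mem hat
        simp only [List.length_cons] at hl
        omega
      have hcounts : ∀ x ∈ t.erase a, Even ((t.erase a).count x) := by
        intro x hx
        have hxt : x ∈ t := List.mem_of_mem_erase hx
        have hcx := h x (by simp [hxt])
        rw [List.count_cons] at hcx
        by_cases hxa : x = a
        · subst hxa
          rw [List.count_erase_self]
          have hcx2 : Even (t.count x + 1) := by simpa using hcx
          rcases hcx2 with ⟨k, hk⟩
          have hge : 1 ≤ t.count x := List.count_pos_iff.mpr hxt
          exact ⟨k - 1, by omega⟩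
        · rw [List.count_erase_of_ne hxa]
          have hax : ¬ (a = x) := fun h => hxa h.symm
          simpa [hax] using hcx
      have hrec := ih (t.erase a) hlen hcounts q
      rw [hperm.countP_eq q, List.countP_cons, List.countP_cons]
      rcases hrec with ⟨k, hk⟩
      by_cases hq : q a = true <;> simp [hq] <;> [exact ⟨k + 1, by omega⟩; exact ⟨k, by omega⟩]

lemma getD_reverse {l : List ℕ} {p : ℕ} (hp : p < l.length) :
    l.reverse.getD p 0 = l.getD (l.length - 1 - p) 0 := by
  have h1 : p < l.reverse.length := by simpa using hp
  rw [List.getD_eq_getElem _ _ h1, List.getElem_reverse,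
    List.getD_eq_getElem _ _ (by omega)]

lemma getD_eq_iff {l : List ℕ} (hs : l.Pairwise (· ≥ ·)) {e : ℕ} (he : 1 ≤ e) (i : ℕ) :
    l.getD i 0 = e ↔ colLen l (e + 1) ≤ i ∧ i < colLen l e := by
  have h1 := lt_colLen_iff hs (j := e) he i
  have h2 := lt_colLen_iff hs (j := e + 1) (by omega) i
  omega


section Core

variable {l : List ℕ}

lemma length_even {n : ℕ} (hpos : ∀ x ∈ l, 0 < x) (hsum : l.sum = 2 * n)
    (hD : ∀ e ∈ l, Even e → Even (l.count e)) : Even l.length := by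
  have hodd : l.countP (fun x => decide (x % 2 = 1)) % 2 = 0 := by
    have := sum_mod_two l
    omega
  have heven : Even (l.countP (fun x => decide (x % 2 = 0))) := by
    rw [List.countP_eq_length_filter]
    set lf := l.filter (fun x => decide (x % 2 = 0)) with hlf
    have hk : ∀ x ∈ lf, Even (lf.count x) := by
      intro x hx
      rw [hlf, List.count_filter (by
        simp only [decide_eq_true_eq]
        have := List.of_mem_filter hx
        simpa using this)]
      have hxl : x ∈ l := List.mem_of_mem_filter hx
      have hx2 : x % 2 = 0 := by
        have := List.of_mem_filter hx
        simpa using this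
      exact hD x hxl (Nat.even_iff.mpr hx2)
    have := even_countP lf.length lf le_rfl hk (fun _ => true)
    rwa [List.countP_true] at this
  have hsplit := List.length_eq_countP_add_countP (fun x => decide (x % 2 = 1)) (l := l)
  have hco : l.countP (fun a => decide (¬ (decide (a % 2 = 1)) = true))
      = l.countP (fun x => decide (x % 2 = 0)) := by
    apply List.countP_congr
    intro a _
    simp only [decide_eq_true_eq, decide_eq_decide]
    omega
  rw [hco] at hsplit
  rw [Nat.even_iff] at heven ⊢
  omega

lemma pI_to_pII (hs : l.Pairwise (· ≥ ·)) (hpos : ∀ x ∈ l, 0 < x)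
    (hD : ∀ e ∈ l, Even e → Even (l.count e))
    (hPI : ∀ i : ℕ, l.getD (2 * i) 0 % 2 = l.getD (2 * i + 1) 0 % 2) :
    ∀ e ∈ l, Even e → Even (colLen l (e + 1)) := by
  have key : ∀ s : ℕ, ∀ e, 0 < e → Even e → e ∈ l → colLen l (e + 1) = s → Even s := by
    intro s
    induction s using Nat.strong_induction_on with
    | _ s ih =>
      intro e he heven hemem hse
      by_contra hodd
      rw [Nat.not_even_iff_odd] at hodd
      obtain ⟨i0, hi0⟩ := hodd
      obtain ⟨iw, hiw⟩ := exists_getD_of_mem hemem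
      have hpose := (getD_eq_iff hs he iw).mp hiw
      have hSe : s < colLen l e := by omega
      have hgs : l.getD s 0 = e := (getD_eq_iff hs he s).mpr ⟨by omega, hSe⟩
      have hgs1 : e + 1 ≤ l.getD (s - 1) 0 :=
        (lt_colLen_iff hs (by omega) (s - 1)).mp (by omega)
      have hpar := hPI i0
      rw [show 2 * i0 + 1 = s by omega, show 2 * i0 = s - 1 by omega, hgs] at hpar
      have heven' : Even (l.getD (s - 1) 0) := by
        rw [Nat.even_iff] at heven ⊢
        omega
      have he'mem : l.getD (s - 1) 0 ∈ l := mem_of_getD hpos rfl (by omega)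
      have hcnt : Even (l.count (l.getD (s - 1) 0)) := hD _ he'mem heven'
      have hsplit := colLen_succ_add_count l (l.getD (s - 1) 0)
      have hA : s - 1 < colLen l (l.getD (s - 1) 0) :=
        ((getD_eq_iff hs (by omega) (s - 1)).mp rfl).2
      have hB : ¬ (s < colLen l (l.getD (s - 1) 0)) := by
        intro hh
        have := (lt_colLen_iff hs (show 1 ≤ l.getD (s - 1) 0 by omega) s).mp hh
        omega
      have hcnt1 : 1 ≤ l.count (l.getD (s - 1) 0) := List.count_pos_iff.mpr he'mem
      obtain ⟨k, hk⟩ := hcnt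
      have hrec := ih (colLen l (l.getD (s - 1) 0 + 1)) (by omega) _ (by omega) heven'
        he'mem rfl
      rw [Nat.even_iff] at hrec
      omega
  intro e hemem heven
  exact key (colLen l (e + 1)) e (hpos e hemem) heven hemem rfl

lemma pII_to_pIII (hs : l.Pairwise (· ≥ ·)) (hpos : ∀ x ∈ l, 0 < x)
    (hD : ∀ e ∈ l, Even e → Even (l.count e))
    (hPII : ∀ e ∈ l, Even e → Even (colLen l (e + 1))) :
    ∀ q < l.length, Even (l.getD q 0) →
      (Odd q → l.getD (q - 1) 0 = l.getD q 0) ∧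
      (Even q → l.getD (q + 1) 0 = l.getD q 0) := by
  intro q hq hgeven
  have he : 0 < l.getD q 0 := (getD_pos_iff hpos q).mpr hq
  have hemem : l.getD q 0 ∈ l := mem_of_getD hpos rfl he
  have hseven : Even (colLen l (l.getD q 0 + 1)) := hPII _ hemem hgeven
  have hcnt : Even (l.count (l.getD q 0)) := hD _ hemem hgeven
  have hsplit := colLen_succ_add_count l (l.getD q 0)
  have hqr := (getD_eq_iff hs he q).mp rfl
  obtain ⟨k1, hk1⟩ := hseven
  obtain ⟨k2, hk2⟩ := hcnt
  constructor
  · intro hqodd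
    rw [Nat.odd_iff] at hqodd
    refine (getD_eq_iff hs he (q - 1)).mpr ⟨by omega, by omega⟩
  · intro hqeven
    rw [Nat.even_iff] at hqeven
    refine (getD_eq_iff hs he (q + 1)).mpr ⟨by omega, by omega⟩

lemma pIII_to_pI (hpos : ∀ x ∈ l, 0 < x) (hm : Even l.length)
    (hPIII : ∀ q < l.length, Even (l.getD q 0) →
      (Odd q → l.getD (q - 1) 0 = l.getD q 0) ∧
      (Even q → l.getD (q + 1) 0 = l.getD q 0)) :
    ∀ i : ℕ, l.getD (2 * i) 0 % 2 = l.getD (2 * i + 1) 0 % 2 := by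
  intro i
  by_cases h1 : 2 * i + 1 < l.length
  · by_cases hev : Even (l.getD (2 * i) 0)
    · have := (hPIII (2 * i) (by omega) hev).2 (even_two_mul i)
      rw [this]
    · by_cases hev2 : Even (l.getD (2 * i + 1) 0)
      · have := (hPIII (2 * i + 1) h1 hev2).1 ⟨i, by omega⟩
        rw [show 2 * i + 1 - 1 = 2 * i by omega] at this
        rw [this]
      · rw [Nat.not_even_iff] at hev hev2
        omega
  · rw [Nat.even_iff] at hm
    have h2 : l.length ≤ 2 * i := by omega
    rw [List.getD_eq_default _ _ h2, List.getD_eq_default _ _ (by omega)]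

end Core


section Bridge

variable {l : List ℕ}

lemma stmt1_iff (hs : l.Pairwise (· ≥ ·)) :
    (∀ e ∈ transposeList l, Odd e → Even ((transposeList l).count e)) ↔
    (∀ i : ℕ, l.getD (2 * i) 0 % 2 = l.getD (2 * i + 1) 0 % 2) := by
  constructor
  · intro h i
    have hanti := getD_anti hs (show 2 * i ≤ 2 * i + 1 by omega)
    by_cases hc : (2 * i + 1) ∈ transposeList l
    · have := h _ hc ⟨i, by omega⟩
      rw [transpose_count hs (by omega), show 2 * i + 1 - 1 = 2 * i by omega,
        Nat.even_iff] at this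
      omega
    · have h0 : (transposeList l).count (2 * i + 1) = 0 := List.count_eq_zero.mpr hc
      rw [transpose_count hs (by omega), show 2 * i + 1 - 1 = 2 * i by omega] at h0
      omega
  · intro h c hcmem hodd
    obtain ⟨i, hi⟩ := hodd
    subst hi
    rw [transpose_count hs (by omega), show 2 * i + 1 - 1 = 2 * i by omega]
    have := h i
    have hanti := getD_anti hs (show 2 * i ≤ 2 * i + 1 by omega)
    rw [Nat.even_iff]
    omega

lemma countP_lt_eq (l : List ℕ) (e : ℕ) :
    l.countP (fun x => decide (e < x)) = colLen l (e + 1) := by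
  rw [colLen]
  apply List.countP_congr
  intro a _
  show decide (e < a) = true ↔ decide (e + 1 ≤ a) = true
  simp only [decide_eq_true_eq]
  omega

lemma stmt3_iff (hm : Even l.length) :
    (∀ p < l.length, Even (l.reverse.getD p 0) →
      (Odd p → l.reverse.getD (p - 1) 0 = l.reverse.getD p 0) ∧
      (Even p → p + 1 < l.length ∧ l.reverse.getD (p + 1) 0 = l.reverse.getD p 0)) ↔
    (∀ q < l.length, Even (l.getD q 0) →
      (Odd q → l.getD (q - 1) 0 = l.getD q 0) ∧
      (Even q → l.getD (q + 1) 0 = l.getD q 0)) := by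
  obtain ⟨t, ht⟩ := hm
  constructor
  · intro h q hq hev
    have hp : l.length - 1 - q < l.length := by omega
    have hrev : l.reverse.getD (l.length - 1 - q) 0 = l.getD q 0 := by
      rw [getD_reverse hp, show l.length - 1 - (l.length - 1 - q) = q by omega]
    obtain ⟨c1, c2⟩ := h (l.length - 1 - q) hp (by rw [hrev]; exact hev)
    constructor
    · intro hqodd
      rw [Nat.odd_iff] at hqodd
      have hpe : Even (l.length - 1 - q) := Nat.even_iff.mpr (by omega)
      obtain ⟨hlt, heq⟩ := c2 hpe
      rw [getD_reverse hlt, hrev,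
        show l.length - 1 - (l.length - 1 - q + 1) = q - 1 by omega] at heq
      exact heq
    · intro hqeven
      rw [Nat.even_iff] at hqeven
      have hpo : Odd (l.length - 1 - q) := Nat.odd_iff.mpr (by omega)
      have heq := c1 hpo
      rw [getD_reverse (show l.length - 1 - q - 1 < l.length by omega), hrev,
        show l.length - 1 - (l.length - 1 - q - 1) = q + 1 by omega] at heq
      exact heq
  · intro h p hp hev
    have hq : l.length - 1 - p < l.length := by omega
    have hrev : l.reverse.getD p 0 = l.getD (l.length - 1 - p) 0 := getD_reverse hp
    obtain ⟨c1, c2⟩ := h (l.length - 1 - p) hq (by rw [← hrev]; exact hev)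
    constructor
    · intro hpodd
      rw [Nat.odd_iff] at hpodd
      have hqe : Even (l.length - 1 - p) := Nat.even_iff.mpr (by omega)
      have heq := c2 hqe
      rw [getD_reverse (show p - 1 < l.length by omega), hrev,
        show l.length - 1 - (p - 1) = l.length - 1 - p + 1 by omega]
      exact heq
    · intro hpeven
      rw [Nat.even_iff] at hpeven
      have hqo : Odd (l.length - 1 - p) := Nat.odd_iff.mpr (by omega)
      have heq := c1 hqo
      refine ⟨by omega, ?_⟩
      rw [getD_reverse (show p + 1 < l.length by omega), hrev,
        show l.length - 1 - (p + 1) = l.length - 1 - p - 1 by omega]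
      exact heq

end Bridge

end TypeDSpecial

/-- For a type D partition `l` of `2n` (every even part has even multiplicity),
the following are equivalent:
(i) the transpose is of type C (every odd part of the transpose has even multiplicity);
(ii) for every even part `e`, the number of parts strictly greater than `e` is even;
(iii) writing the parts as `r_{2k+1} ≥ ⋯ ≥ r_0` (positions counted from the end,
so `r_p = l.reverse.getD p 0`), the even parts occur precisely in consecutive equal
pairs `r_{2l-1} = r_{2l-2}`.
In particular, every very even partition (all parts even) satisfies these conditions. -/
theorem typeD_special_characterizations (n : ℕ) (l : List ℕ)
    (hpart : IsPartitionOf (2 * n) l)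
    (hD : ∀ e ∈ l, Even e → Even (l.count e)) :
    List.TFAE
      [∀ e ∈ transposeList l, Odd e → Even ((transposeList l).count e),
       ∀ e ∈ l, Even e → Even (l.countP (fun x => decide (e < x))),
       ∀ p < l.length, Even (l.reverse.getD p 0) →
         (Odd p → l.reverse.getD (p - 1) 0 = l.reverse.getD p 0) ∧
         (Even p → p + 1 < l.length ∧ l.reverse.getD (p + 1) 0 = l.reverse.getD p 0)]
    ∧ ((∀ x ∈ l, Even x) →
        ∀ e ∈ transposeList l, Odd e → Even ((transposeList l).count e)) := by
  obtain ⟨hs, hpos, hsum⟩ := hpart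
  have hm : Even l.length := TypeDSpecial.length_even hpos hsum hD
  have hb1 := TypeDSpecial.stmt1_iff (l := l) hs
  have hb3 := TypeDSpecial.stmt3_iff (l := l) hm
  constructor
  · tfae_have 1 → 2 := by
      intro hA e hemem heven
      rw [TypeDSpecial.countP_lt_eq]
      exact TypeDSpecial.pI_to_pII hs hpos hD (hb1.mp hA) e hemem heven
    tfae_have 2 → 3 := by
      intro hA
      refine hb3.mpr ?_
      apply TypeDSpecial.pII_to_pIII hs hpos hD
      intro e hemem heven
      have := hA e hemem heven
      rwa [TypeDSpecial.countP_lt_eq] at this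
    tfae_have 3 → 1 := by
      intro hA
      exact hb1.mpr (TypeDSpecial.pIII_to_pI hpos hm (hb3.mp hA))
    tfae_finish
  · intro hall
    refine hb1.mpr (TypeDSpecial.pIII_to_pI hpos hm
      (TypeDSpecial.pII_to_pIII hs hpos hD ?_))
    intro e hemem _
    exact TypeDSpecial.even_countP l.length l le_rfl (fun x hx => hD x hx (hall x hx)) _
end
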